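/- Let n ≥ 2 and let A, B ∈ Mₙ(ℂ) be such that A is normal, the operator norm of B (acting on ℂⁿ with the Euclidean norm) equals 1, and {(x,y,z) ∈ ℂ³ : det(x·A + y·B + z·AB − I) = 0} = {(x,y,z) ∈ ℂ³ : xⁿ + yⁿ + (−1)^{n−1} zⁿ = 1}. Then A and B are both unitary, and the characteristic polynomial of A and the characteristic polynomial of B are each equal to Xⁿ − 1; in particular the spectra of A and of B each consist of all n-th roots of unity, each an eigenvalue of multiplicity one. -/

import Mathlib

open Matrix Complex Polynomial

noncomputable section

-- C*-algebra lemmas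
section Cstar

variable {𝔸 : Type*} [NormedRing 𝔸] [StarRing 𝔸] [CStarRing 𝔸] [NormOneClass 𝔸]

lemma aux_norm_mul_self (a : 𝔸) (h : a * star a = star a * a) : ‖a * a‖ = ‖a‖ * ‖a‖ := by
  have h1 : star (a * a) * (a * a) = (star a * a) * (star a * a) := by
    rw [StarMul.star_mul]
    calc star a * star a * (a * a) = star a * (star a * a) * a := by
          simp only [mul_assoc]
      _ = star a * (a * star a) * a := by rw [h]
      _ = (star a * a) * (star a * a) := by
          simp only [mul_assoc]
  have hsa : star (star a * a) = star a * a := by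
    rw [StarMul.star_mul, star_star]
  have h2 : ‖a * a‖ * ‖a * a‖ = (‖a‖ * ‖a‖) * (‖a‖ * ‖a‖) := by
    calc ‖a * a‖ * ‖a * a‖ = ‖star (a * a) * (a * a)‖ :=
          (CStarRing.norm_star_mul_self).symm
      _ = ‖star (star a * a) * (star a * a)‖ := by rw [h1, hsa]
      _ = ‖star a * a‖ * ‖star a * a‖ := CStarRing.norm_star_mul_self
      _ = (‖a‖ * ‖a‖) * (‖a‖ * ‖a‖) := by rw [CStarRing.norm_star_mul_self]
  nlinarith [norm_nonneg (a * a), norm_nonneg a, mul_nonneg (norm_nonneg a) (norm_nonneg a)]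

lemma aux_norm_two_pow (a : 𝔸) (h : a * star a = star a * a) (k : ℕ) :
    ‖a ^ 2 ^ k‖ = ‖a‖ ^ 2 ^ k := by
  induction k with
  | zero => simp
  | succ k ih =>
    have hc : Commute a (star a) := h
    have hm : a ^ 2 ^ k * star (a ^ 2 ^ k) = star (a ^ 2 ^ k) * a ^ 2 ^ k := by
      rw [star_pow]
      exact (hc.pow_pow _ _)
    have := aux_norm_mul_self (a ^ 2 ^ k) hm
    rw [pow_succ, pow_mul, sq, this, ih, ← sq, ← pow_mul, ← pow_succ]

lemma aux_norm_le_one (a : 𝔸) (h : a * star a = star a * a) {n : ℕ} (hn : 1 ≤ n)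
    (han : a ^ n = 1) : ‖a‖ ≤ 1 := by
  by_contra hgt
  push_neg at hgt
  set m := 2 ^ n with hm
  have hmn : n ≤ m := (Nat.lt_two_pow_self (n := n)).le
  have hr : m % n < n := Nat.mod_lt _ hn
  have hsplit : a ^ m = a ^ (m % n) := by
    conv_lhs => rw [← Nat.div_add_mod m n]
    rw [pow_add, pow_mul, han, one_pow, one_mul]
  have h1 : ‖a‖ ^ m = ‖a ^ (m % n)‖ := by
    rw [← hsplit, aux_norm_two_pow a h n]
  have h2 : ‖a ^ (m % n)‖ ≤ ‖a‖ ^ (m % n) := norm_pow_le a (m % n)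
  have h3 : ‖a‖ ^ (m % n) < ‖a‖ ^ m := pow_lt_pow_right₀ hgt (lt_of_lt_of_le hr hmn)
  linarith

end Cstar

-- isometry lemma
lemma aux_star_mul_self_eq_one {n : ℕ}
    (b c : EuclideanSpace ℂ (Fin n) →L[ℂ] EuclideanSpace ℂ (Fin n))
    (hb : ‖b‖ ≤ 1) (hc : ‖c‖ ≤ 1) (hcb : c * b = 1) : star b * b = 1 := by
  have hiso : ∀ v, ‖b v‖ = ‖v‖ := by
    intro v
    refine le_antisymm ?_ ?_
    · calc ‖b v‖ ≤ ‖b‖ * ‖v‖ := b.le_opNorm v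
        _ ≤ 1 * ‖v‖ := mul_le_mul_of_nonneg_right hb (norm_nonneg v)
        _ = ‖v‖ := one_mul _
    · have hv : c (b v) = v := by
        rw [← ContinuousLinearMap.mul_apply, hcb, ContinuousLinearMap.one_apply]
      calc ‖v‖ = ‖c (b v)‖ := by rw [hv]
        _ ≤ ‖c‖ * ‖b v‖ := c.le_opNorm _
        _ ≤ 1 * ‖b v‖ := mul_le_mul_of_nonneg_right hc (norm_nonneg _)
        _ = ‖b v‖ := one_mul _
  have key : ∀ x : EuclideanSpace ℂ (Fin n),
      (inner ℂ ((star b * b - 1) x) x : ℂ) = 0 := by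
    intro x
    rw [ContinuousLinearMap.sub_apply, inner_sub_left,
      ContinuousLinearMap.mul_apply, ContinuousLinearMap.one_apply,
      ContinuousLinearMap.star_eq_adjoint, ContinuousLinearMap.adjoint_inner_left,
      inner_self_eq_norm_sq_to_K, inner_self_eq_norm_sq_to_K, hiso, sub_self]
  have h2 : ((star b * b - 1 : EuclideanSpace ℂ (Fin n) →L[ℂ] EuclideanSpace ℂ (Fin n)) :
      EuclideanSpace ℂ (Fin n) →ₗ[ℂ] EuclideanSpace ℂ (Fin n)) = 0 :=
    (inner_map_self_eq_zero _).mp key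
  have h3 : (star b * b - 1 : EuclideanSpace ℂ (Fin n) →L[ℂ] EuclideanSpace ℂ (Fin n)) = 0 :=
    ContinuousLinearMap.coe_injective (by rw [h2]; rfl)
  rw [sub_eq_zero] at h3
  exact h3


lemma aux_eval_charpoly {n : ℕ} (M : Matrix (Fin n) (Fin n) ℂ) (μ : ℂ) :
    M.charpoly.eval μ = (μ • (1 : Matrix (Fin n) (Fin n) ℂ) - M).det := by
  rw [Matrix.charpoly, ← Polynomial.coe_evalRingHom, RingHom.map_det]
  congr 1
  ext i j
  by_cases hij : i = j
  · subst hij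
    simp [Matrix.charmatrix_apply_eq, Matrix.one_apply]
  · simp [Matrix.charmatrix_apply_ne _ _ _ hij, Matrix.one_apply, hij]

lemma aux_charpoly {n : ℕ} (hn : 2 ≤ n) (M : Matrix (Fin n) (Fin n) ℂ)
    (hroots : ∀ x : ℂ, x ^ n = 1 → (x • M - 1).det = 0) :
    M.charpoly = X ^ n - 1 := by
  have hn0 : n ≠ 0 := by omega
  have hprim := Complex.isPrimitiveRoot_exp n hn0
  have hcard : (Polynomial.nthRootsFinset n (1 : ℂ)).card = n := hprim.card_nthRootsFinset
  have heval : ∀ μ ∈ Polynomial.nthRootsFinset n (1 : ℂ), M.charpoly.eval μ = 0 := by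
    intro μ hμ
    have hμn : μ ^ n = 1 := (Polynomial.mem_nthRootsFinset (by omega) (1 : ℂ)).mp hμ
    have hμ0 : μ ≠ 0 := by
      intro h
      rw [h, zero_pow hn0] at hμn
      exact zero_ne_one hμn
    have hxn : μ⁻¹ ^ n = 1 := by rw [inv_pow, hμn, inv_one]
    have hdet := hroots μ⁻¹ hxn
    have hfac : μ⁻¹ • M - 1 = μ⁻¹ • (M - μ • (1 : Matrix (Fin n) (Fin n) ℂ)) := by
      rw [smul_sub, smul_smul, inv_mul_cancel₀ hμ0, one_smul]
    rw [hfac, Matrix.det_smul, Fintype.card_fin] at hdet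
    have hx0 : (μ⁻¹ : ℂ) ≠ 0 := inv_ne_zero hμ0
    have hd0 : (M - μ • (1 : Matrix (Fin n) (Fin n) ℂ)).det = 0 := by
      rcases mul_eq_zero.mp hdet with h | h
      · exact absurd h (pow_ne_zero _ hx0)
      · exact h
    rw [aux_eval_charpoly, ← neg_sub, Matrix.det_neg, Fintype.card_fin, hd0, mul_zero]
  have hq0 : M.charpoly - (X ^ n - 1) = 0 := by
    rcases eq_or_ne (M.charpoly - (X ^ n - 1)) 0 with h | h
    · exact h
    · have hmonic : (X ^ n - 1 : ℂ[X]).Monic := by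
        simpa using monic_X_pow_sub_C (1 : ℂ) hn0
      have hdeg2 : (X ^ n - 1 : ℂ[X]).degree = n := by
        simpa using degree_X_pow_sub_C (by omega : 0 < n) (1 : ℂ)
      have hd : M.charpoly.degree = (X ^ n - 1 : ℂ[X]).degree := by
        rw [Matrix.charpoly_degree_eq_dim, Fintype.card_fin, hdeg2]
      have hlt : (M.charpoly - (X ^ n - 1)).degree < M.charpoly.degree :=
        Polynomial.degree_sub_lt hd (M.charpoly_monic).ne_zero
          (by rw [(M.charpoly_monic).leadingCoeff, hmonic.leadingCoeff])
      have hnat : (M.charpoly - (X ^ n - 1)).natDegree < n := by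
        rw [Polynomial.natDegree_lt_iff_degree_lt h]
        calc (M.charpoly - (X ^ n - 1)).degree < M.charpoly.degree := hlt
          _ = n := by rw [Matrix.charpoly_degree_eq_dim, Fintype.card_fin]
      refine Polynomial.eq_zero_of_natDegree_lt_card_of_eval_eq_zero' _
        (Polynomial.nthRootsFinset n (1 : ℂ)) ?_ (by rw [hcard]; exact hnat)
      intro μ hμ
      have hμn : μ ^ n = 1 := (Polynomial.mem_nthRootsFinset (by omega) (1 : ℂ)).mp hμ
      simp [heval μ hμ, hμn]
  rw [sub_eq_zero] at hq0
  exact hq0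

theorem stmt_2 (n : ℕ) (hn : 2 ≤ n)
    (A B : Matrix (Fin n) (Fin n) ℂ)
    (hA : A * Aᴴ = Aᴴ * A)
    (hB : ‖Matrix.toEuclideanCLM (𝕜 := ℂ) B‖ = 1)
    (hspec : {p : ℂ × ℂ × ℂ |
        (p.1 • A + p.2.1 • B + p.2.2 • (A * B) - 1).det = 0} =
      {p : ℂ × ℂ × ℂ |
        p.1 ^ n + p.2.1 ^ n + (-1 : ℂ) ^ (n - 1) * p.2.2 ^ n = 1}) :
    A * Aᴴ = 1 ∧ B * Bᴴ = 1 ∧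
      A.charpoly = X ^ n - 1 ∧ B.charpoly = X ^ n - 1 := by
  have hn0 : n ≠ 0 := by omega
  haveI : Nonempty (Fin n) := ⟨⟨0, by omega⟩⟩
  have hsetA : ∀ x : ℂ, x ^ n = 1 → (x • A - 1).det = 0 := by
    intro x hx
    have h := (Set.ext_iff.mp hspec (x, 0, 0)).mpr
    simp only [Set.mem_setOf_eq] at h
    have h2 := h (by simp [zero_pow hn0, hx])
    simpa using h2
  have hsetB : ∀ x : ℂ, x ^ n = 1 → (x • B - 1).det = 0 := by
    intro x hx
    have h := (Set.ext_iff.mp hspec (0, x, 0)).mpr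
    simp only [Set.mem_setOf_eq] at h
    have h2 := h (by simp [zero_pow hn0, hx])
    simpa using h2
  have hcA : A.charpoly = X ^ n - 1 := aux_charpoly hn A hsetA
  have hcB : B.charpoly = X ^ n - 1 := aux_charpoly hn B hsetB
  have hApow : A ^ n = 1 := by
    have h := Matrix.aeval_self_charpoly A
    rw [hcA] at h
    simp only [map_sub, _root_.map_pow, aeval_X, _root_.map_one] at h
    rwa [sub_eq_zero] at h
  have hBpow : B ^ n = 1 := by
    have h := Matrix.aeval_self_charpoly B
    rw [hcB] at h
    simp only [map_sub, _root_.map_pow, aeval_X, _root_.map_one] at h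
    rwa [sub_eq_zero] at h
  have hn1 : n - 1 + 1 = n := by omega
  -- A part
  set a := Matrix.toEuclideanCLM (𝕜 := ℂ) A with ha
  have han : a ^ n = 1 := by rw [ha, ← _root_.map_pow, hApow, _root_.map_one]
  have hnorm_a : a * star a = star a * a := by
    rw [ha, ← map_star, ← _root_.map_mul, ← _root_.map_mul, Matrix.star_eq_conjTranspose, hA]
  have hcomm : Commute a (star a) := hnorm_a
  have ha1 : ‖a‖ ≤ 1 := aux_norm_le_one a hnorm_a (by omega) han
  have hc_normal : a ^ (n-1) * star (a ^ (n-1)) = star (a ^ (n-1)) * a ^ (n-1) := by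
    rw [star_pow]; exact hcomm.pow_pow _ _
  have hcn : (a ^ (n-1)) ^ n = 1 := by
    rw [← pow_mul, mul_comm, pow_mul, han, one_pow]
  have hc1 : ‖a ^ (n-1)‖ ≤ 1 := aux_norm_le_one _ hc_normal (by omega) hcn
  have hca : a ^ (n-1) * a = 1 := by rw [← pow_succ, hn1, han]
  have hstarA : star a * a = 1 := aux_star_mul_self_eq_one a (a ^ (n-1)) ha1 hc1 hca
  have hAH : Aᴴ * A = 1 := by
    have h9 : Matrix.toEuclideanCLM (𝕜 := ℂ) (Aᴴ * A)
        = Matrix.toEuclideanCLM (𝕜 := ℂ) (1 : Matrix (Fin n) (Fin n) ℂ) := by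
      rw [_root_.map_mul, _root_.map_one, ← Matrix.star_eq_conjTranspose, map_star]
      exact hstarA
    exact (Matrix.toEuclideanCLM (𝕜 := ℂ) (n := Fin n)).injective h9
  -- B part
  set b := Matrix.toEuclideanCLM (𝕜 := ℂ) B with hb
  have hbn : b ^ n = 1 := by rw [hb, ← _root_.map_pow, hBpow, _root_.map_one]
  have hb1 : ‖b‖ ≤ 1 := le_of_eq hB
  have hcb1 : ‖b ^ (n-1)‖ ≤ 1 := by
    calc ‖b ^ (n-1)‖ ≤ ‖b‖ ^ (n-1) := norm_pow_le b (n-1)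
      _ = 1 := by rw [hB, one_pow]
  have hcb : b ^ (n-1) * b = 1 := by rw [← pow_succ, hn1, hbn]
  have hstarB : star b * b = 1 := aux_star_mul_self_eq_one b (b ^ (n-1)) hb1 hcb1 hcb
  have hBH : Bᴴ * B = 1 := by
    have h9 : Matrix.toEuclideanCLM (𝕜 := ℂ) (Bᴴ * B)
        = Matrix.toEuclideanCLM (𝕜 := ℂ) (1 : Matrix (Fin n) (Fin n) ℂ) := by
      rw [_root_.map_mul, _root_.map_one, ← Matrix.star_eq_conjTranspose, map_star]
      exact hstarB
    exact (Matrix.toEuclideanCLM (𝕜 := ℂ) (n := Fin n)).injective h9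
  exact ⟨mul_eq_one_comm.mpr hAH, mul_eq_one_comm.mpr hBH, hcA, hcB⟩
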